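/- Let g_1,…,g_n : ℝ^d → ℝ^{d₁} be C_g-Lipschitz and differentiable, let t_1,…,t_n ∈ ℝ^{d₁} be fixed, and let q(v) = (1/(2n))∑_{i=1}^n ‖t_i − g_i(v)‖². Then: (a) ‖∇q(v)‖² ≤ 2·C_g²·q(v) for every v ∈ ℝ^d; (b) if v ∈ ℝ^d satisfies ‖∑_{i=1}^n (Dg_i(v))^* u_i‖² ≥ (δ/2)·∑_{i=1}^n ‖u_i‖² for all u_1,…,u_n ∈ ℝ^{d₁}, then ‖∇q(v)‖² ≥ (δ/n)·q(v). -/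

import Mathlib

open scoped RealInnerProductSpace BigOperators

lemma grad_aux (d d₁ n : ℕ)
    (g : Fin n → EuclideanSpace ℝ (Fin d) → EuclideanSpace ℝ (Fin d₁))
    (t : Fin n → EuclideanSpace ℝ (Fin d₁))
    (hg_diff : ∀ i, Differentiable ℝ (g i))
    (q : EuclideanSpace ℝ (Fin d) → ℝ)
    (hq : ∀ v, q v = (1 / (2 * (n : ℝ))) * ∑ i, ‖t i - g i v‖ ^ 2)
    (v : EuclideanSpace ℝ (Fin d)) (hn : 1 ≤ n) :
    gradient q v = (n : ℝ)⁻¹ •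
      ∑ i, ContinuousLinearMap.adjoint (fderiv ℝ (g i) v) (g i v - t i) := by
  set D : Fin n → (EuclideanSpace ℝ (Fin d) →L[ℝ] EuclideanSpace ℝ (Fin d₁)) :=
    fun i => fderiv ℝ (g i) v with hD
  set L : EuclideanSpace ℝ (Fin d) →L[ℝ] ℝ := (1 / (2 * (n : ℝ))) •
      ∑ i, ((fderivInnerCLM ℝ ((t i - g i v), (t i - g i v))).comp
        (((-D i)).prod ((-D i)))) with hLdef
  have hL : ∀ i, HasFDerivAt (fun w => ‖t i - g i w‖ ^ 2)
      ((fderivInnerCLM ℝ ((t i - g i v), (t i - g i v))).comp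
        (((-D i)).prod ((-D i)))) v := by
    intro i
    have h1 : HasFDerivAt (fun w => t i - g i w) (-D i) v := by
      simpa [hD] using (hasFDerivAt_const (t i) v).fun_sub ((hg_diff i v).hasFDerivAt)
    have := h1.inner (𝕜 := ℝ) h1
    simpa only [real_inner_self_eq_norm_sq] using this
  have hq' : HasFDerivAt q L v := by
    have hsum : HasFDerivAt (fun w => ∑ i, ‖t i - g i w‖ ^ 2)
        (∑ i, ((fderivInnerCLM ℝ ((t i - g i v), (t i - g i v))).comp
          (((-D i)).prod ((-D i))))) v := HasFDerivAt.fun_sum (fun i _ => hL i)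
    have hqe : q = fun w => (1 / (2 * (n : ℝ))) * ∑ i, ‖t i - g i w‖ ^ 2 := funext hq
    rw [hqe]
    exact hsum.const_mul _
  have hgrad : HasGradientAt q
      ((InnerProductSpace.toDual ℝ (EuclideanSpace ℝ (Fin d))).symm L) v :=
    (hasFDerivAt_iff_hasGradientAt).mp hq'
  rw [hgrad.gradient]
  have key : L = InnerProductSpace.toDual ℝ (EuclideanSpace ℝ (Fin d))
      ((n : ℝ)⁻¹ • ∑ i, ContinuousLinearMap.adjoint (fderiv ℝ (g i) v) (g i v - t i)) := by
    ext w
    simp only [hLdef, InnerProductSpace.toDual_apply_apply, ContinuousLinearMap.coe_smul',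
      Pi.smul_apply, ContinuousLinearMap.coe_sum', Finset.sum_apply,
      ContinuousLinearMap.comp_apply, ContinuousLinearMap.prod_apply,
      ContinuousLinearMap.neg_apply, fderivInnerCLM_apply,
      inner_smul_left, sum_inner, ContinuousLinearMap.adjoint_inner_left,
      smul_eq_mul, RCLike.star_def, conj_trivial]
    rw [show (1/(2*(n:ℝ))) * ∑ x, (⟪t x - g x v, -(D x) w⟫ + ⟪-(D x) w, t x - g x v⟫)
        = ∑ x, (1/(2*(n:ℝ))) * (⟪t x - g x v, -(D x) w⟫ + ⟪-(D x) w, t x - g x v⟫) from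
        Finset.mul_sum _ _ _,
      show ((n:ℝ))⁻¹ * ∑ x, ⟪g x v - t x, (fderiv ℝ (g x) v) w⟫
        = ∑ x, ((n:ℝ))⁻¹ * ⟪g x v - t x, (fderiv ℝ (g x) v) w⟫ from Finset.mul_sum _ _ _]
    apply Finset.sum_congr rfl
    intro i _
    have e1 : ⟪g i v - t i, D i w⟫ = -⟪t i - g i v, D i w⟫ := by
      rw [← inner_neg_left, neg_sub]
    simp only [ContinuousLinearMap.neg_apply, inner_neg_left, inner_neg_right, e1,
      real_inner_comm ((D i) w)]
    have h : (0:ℝ) < n := by exact_mod_cast hn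
    field_simp
    have e2 : ⟪g i v - t i, (fderiv ℝ (g i) v) w⟫ = -⟪t i - g i v, (D i) w⟫ := e1
    rw [e2, real_inner_comm ((D i) w)]
    ring
  rw [key, LinearIsometryEquiv.symm_apply_apply]

/-- For `q(v) = (1/(2n)) ∑ i ‖t i − g i v‖²` with each `g i` `Cg`-Lipschitz and
differentiable: (a) `‖∇q(v)‖² ≤ 2·Cg²·q(v)`; (b) if
`‖∑ i (Dg_i(v))^* u_i‖² ≥ (δ/2) ∑ i ‖u_i‖²` for all `u`, then `‖∇q(v)‖² ≥ (δ/n)·q(v)`. -/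
theorem stmt6 (d d₁ n : ℕ) (hn : 1 ≤ n)
    (g : Fin n → EuclideanSpace ℝ (Fin d) → EuclideanSpace ℝ (Fin d₁))
    (t : Fin n → EuclideanSpace ℝ (Fin d₁))
    (Cg δ : ℝ)
    (hg_lip : ∀ i (x y : EuclideanSpace ℝ (Fin d)), ‖g i x - g i y‖ ≤ Cg * ‖x - y‖)
    (hg_diff : ∀ i, Differentiable ℝ (g i))
    (q : EuclideanSpace ℝ (Fin d) → ℝ)
    (hq : ∀ v, q v = (1 / (2 * (n : ℝ))) * ∑ i, ‖t i - g i v‖ ^ 2) :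
    (∀ v, ‖gradient q v‖ ^ 2 ≤ 2 * Cg ^ 2 * q v) ∧
    (∀ v : EuclideanSpace ℝ (Fin d),
      (∀ u : Fin n → EuclideanSpace ℝ (Fin d₁),
        δ / 2 * ∑ i, ‖u i‖ ^ 2 ≤
          ‖∑ i, ContinuousLinearMap.adjoint (fderiv ℝ (g i) v) (u i)‖ ^ 2) →
      δ / n * q v ≤ ‖gradient q v‖ ^ 2) := by
  have hn0 : (0:ℝ) < n := by exact_mod_cast hn
  constructor
  · -- part (a)
    intro v
    rw [grad_aux d d₁ n g t hg_diff q hq v hn, hq v]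
    set C' : ℝ := max Cg 0 with hC'
    have hC'0 : 0 ≤ C' := le_max_right _ _
    have hC'sq : C' ^ 2 ≤ Cg ^ 2 := by
      rcases le_or_gt 0 Cg with h | h
      · rw [hC', max_eq_left h]
      · rw [hC', max_eq_right h.le]; simpa using sq_nonneg Cg
    -- Lipschitz bound on derivatives
    have hDle : ∀ i, ‖fderiv ℝ (g i) v‖ ≤ C' := by
      intro i
      have hlip : LipschitzWith ⟨C', hC'0⟩ (g i) := by
        apply LipschitzWith.of_dist_le_mul
        intro x y
        rw [dist_eq_norm, dist_eq_norm]
        exact (hg_lip i x y).trans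
          (mul_le_mul_of_nonneg_right (le_max_left _ _) (norm_nonneg _))
      exact norm_fderiv_le_of_lipschitz ℝ hlip
    set r : Fin n → EuclideanSpace ℝ (Fin d₁) := fun i => g i v - t i with hr
    set S := ∑ i, ContinuousLinearMap.adjoint (fderiv ℝ (g i) v) (r i) with hS
    set s : ℝ := ∑ i, ‖r i‖ with hs
    set s2 : ℝ := ∑ i, ‖r i‖ ^ 2 with hs2
    have hs2nn : 0 ≤ s2 := Finset.sum_nonneg fun i _ => by positivity
    have hterm : ∀ i, ‖ContinuousLinearMap.adjoint (fderiv ℝ (g i) v) (r i)‖ ≤ C' * ‖r i‖ := by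
      intro i
      calc ‖ContinuousLinearMap.adjoint (fderiv ℝ (g i) v) (r i)‖
          ≤ ‖ContinuousLinearMap.adjoint (fderiv ℝ (g i) v)‖ * ‖r i‖ :=
            ContinuousLinearMap.le_opNorm _ _
        _ ≤ C' * ‖r i‖ := by
            apply mul_le_mul_of_nonneg_right _ (norm_nonneg _)
            rw [LinearIsometryEquiv.norm_map]
            exact hDle i
    have hSle : ‖S‖ ≤ C' * s := by
      calc ‖S‖ ≤ ∑ i, ‖ContinuousLinearMap.adjoint (fderiv ℝ (g i) v) (r i)‖ :=
            norm_sum_le _ _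
        _ ≤ ∑ i, C' * ‖r i‖ := Finset.sum_le_sum fun i _ => hterm i
        _ = C' * s := by rw [hs, Finset.mul_sum]
    have hGle : ‖(n:ℝ)⁻¹ • S‖ ≤ (n:ℝ)⁻¹ * (C' * s) := by
      rw [norm_smul, Real.norm_eq_abs, abs_of_nonneg (by positivity)]
      exact mul_le_mul_of_nonneg_left hSle (by positivity)
    have h1 : ‖(n:ℝ)⁻¹ • S‖ ^ 2 ≤ ((n:ℝ)⁻¹ * (C' * s)) ^ 2 :=
      pow_le_pow_left₀ (norm_nonneg _) hGle 2
    have h3 : s ^ 2 ≤ (n:ℝ) * s2 := by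
      have := sq_sum_le_card_mul_sum_sq (s := (Finset.univ : Finset (Fin n)))
        (f := fun i => ‖r i‖)
      simpa [hs, hs2] using this
    have h1' : ‖(n:ℝ)⁻¹ • S‖ ^ 2 * (n:ℝ) ^ 2 ≤ C' ^ 2 * s ^ 2 := by
      calc ‖(n:ℝ)⁻¹ • S‖ ^ 2 * (n:ℝ) ^ 2 ≤ ((n:ℝ)⁻¹ * (C' * s)) ^ 2 * (n:ℝ) ^ 2 :=
            mul_le_mul_of_nonneg_right h1 (by positivity)
        _ = C' ^ 2 * s ^ 2 := by field_simp
    have hB : C' ^ 2 * s ^ 2 ≤ C' ^ 2 * ((n:ℝ) * s2) :=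
      mul_le_mul_of_nonneg_left h3 (by positivity)
    have key : (n:ℝ) * ‖(n:ℝ)⁻¹ • S‖ ^ 2 ≤ Cg ^ 2 * s2 := by
      have hA : (n:ℝ) * ((n:ℝ) * ‖(n:ℝ)⁻¹ • S‖ ^ 2) ≤ (n:ℝ) * (C' ^ 2 * s2) := by
        nlinarith [h1', hB]
      have := le_of_mul_le_mul_left hA hn0
      exact this.trans (mul_le_mul_of_nonneg_right hC'sq hs2nn)
    have hrev : ∑ i, ‖t i - g i v‖ ^ 2 = s2 := by
      rw [hs2]
      exact Finset.sum_congr rfl fun i _ => by rw [hr, norm_sub_rev]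
    rw [hrev]
    have heq : 2 * Cg ^ 2 * (1 / (2 * (n:ℝ)) * s2) = (Cg ^ 2 * s2) / n := by
      field_simp
    rw [heq, le_div_iff₀ hn0]
    linarith [key]
  · -- part (b)
    intro v hu
    rw [grad_aux d d₁ n g t hg_diff q hq v hn, hq v]
    have h := hu (fun i => g i v - t i)
    set S := ∑ i, ContinuousLinearMap.adjoint (fderiv ℝ (g i) v) (g i v - t i) with hS
    have hrev : ∑ i, ‖t i - g i v‖ ^ 2 = ∑ i, ‖g i v - t i‖ ^ 2 := by
      apply Finset.sum_congr rfl
      intro i _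
      rw [norm_sub_rev]
    have hnorm : ‖(n:ℝ)⁻¹ • S‖ ^ 2 = ((n:ℝ)⁻¹) ^ 2 * ‖S‖ ^ 2 := by
      rw [norm_smul, mul_pow, Real.norm_eq_abs, sq_abs]
    rw [hnorm, hrev]
    have heq : δ / n * (1 / (2 * (n:ℝ)) * ∑ i, ‖g i v - t i‖ ^ 2)
        = ((n:ℝ)⁻¹) ^ 2 * (δ / 2 * ∑ i, ‖g i v - t i‖ ^ 2) := by
      ring
    rw [heq]
    exact mul_le_mul_of_nonneg_left h (by positivity)
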